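/- Let ℓmin, ℓmax > 0 be reals with ℓmin ≤ ℓmax, let ρ = ℓmax/ℓmin and γ̄ = ⌊ρ⌋ ≥ 1 (as a real). Let m be a real with m > ρ and let s be a real with 0 ≤ s ≤ m. Then (s·ℓmin) / ((s/γ̄ − 1)·ℓmax + m·ℓmin) ≤ (m·γ̄) / (m·(ρ + γ̄) − ρ·γ̄), where both denominators are positive under these hypotheses. -/

import Mathlib

/-- Case 1 of the stochastic-arrivals upper bound with `p < q`: the throughput bound
`(s·ℓmin)/((s/γ̄ − 1)·ℓmax + m·ℓmin)` is maximized at `s = m`, where it equals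
`(m·γ̄)/(m·(ρ + γ̄) − ρ·γ̄)`; moreover both denominators are positive. -/
theorem stochastic_case1_bound
    (ℓmin ℓmax : ℝ) (hℓmin : 0 < ℓmin) (hle : ℓmin ≤ ℓmax)
    (ρ : ℝ) (hρ : ρ = ℓmax / ℓmin)
    (γ : ℝ) (hγ : γ = (⌊ρ⌋ : ℝ)) (hγ1 : 1 ≤ γ)
    (m s : ℝ) (hm : ρ < m) (hs0 : 0 ≤ s) (hsm : s ≤ m) :
    0 < (s / γ - 1) * ℓmax + m * ℓmin ∧
    0 < m * (ρ + γ) - ρ * γ ∧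
    (s * ℓmin) / ((s / γ - 1) * ℓmax + m * ℓmin) ≤ (m * γ) / (m * (ρ + γ) - ρ * γ) := by
  have hγ0 : 0 < γ := lt_of_lt_of_le one_pos hγ1
  have hγρ : γ ≤ ρ := by rw [hγ]; exact Int.floor_le ρ
  have hℓmax : ℓmax = ρ * ℓmin := by rw [hρ]; field_simp
  have ht0 : 0 ≤ s / γ := div_nonneg hs0 hγ0.le
  have hst : s = (s / γ) * γ := (div_mul_cancel₀ s hγ0.ne').symm
  have hρ0 : 0 < ρ := lt_of_lt_of_le hγ0 hγρ
  have hD1 : 0 < (s / γ - 1) * ℓmax + m * ℓmin := by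
    rw [hℓmax]; nlinarith [mul_nonneg ht0 (mul_pos hρ0 hℓmin).le]
  have hD2 : 0 < m * (ρ + γ) - ρ * γ := by nlinarith
  refine ⟨hD1, hD2, ?_⟩
  rw [div_le_div_iff₀ hD1 hD2, hℓmax]
  have key : m * γ * (s / γ * (ρ * ℓmin)) = m * s * (ρ * ℓmin) := by
    field_simp
  nlinarith [mul_nonneg (mul_nonneg (sub_nonneg.2 hsm) (sub_nonneg.2 hm.le)) (mul_pos hγ0 (mul_pos hρ0 hℓmin)).le, key]
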